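/- Let Z be a continuum, let q : Z → [0,1] be a monotone atomic open continuous surjection with q⁻¹(1) a one-point set and q⁻¹(y) nondegenerate for each y ∈ [0,1), let μ : C(Z) → [0, μ(Z)] be a Whitney map, let s ∈ (0, μ(Z)), and let a, b ∈ (0,1) with a ≤ b satisfy μ(q⁻¹([a,b])) = s. Then each of the sets {C ∈ μ⁻¹(s) : C ⊆ q⁻¹([0,b])} and {C ∈ μ⁻¹(s) : C ⊆ q⁻¹([a,1])} is a nondegenerate subcontinuum of the Whitney level μ⁻¹(s) (i.e., a nonempty compact connected subset of C(Z) containing more than one point). -/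

import Mathlib

open TopologicalSpace unitInterval Set Metric EMetric Filter Topology

/-- The hyperspace `C(Z)` of subcontinua of `Z`. -/
abbrev Subcontinua (Z : Type*) [MetricSpace Z] : Type _ :=
  {C : NonemptyCompacts Z // IsConnected (C : Set Z)}

/-- A Whitney map for `C(Z)`. -/
def IsWhitneyMap {Z : Type*} [MetricSpace Z] (μ : Subcontinua Z → ℝ) : Prop :=
  Continuous μ ∧
  (∀ C : Subcontinua Z, (C.1 : Set Z).Subsingleton → μ C = 0) ∧
  ∀ A B : Subcontinua Z, (A.1 : Set Z) ⊂ (B.1 : Set Z) → μ A < μ B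

namespace WhitneyPf

variable {Z : Type*} [MetricSpace Z]

lemma tendsto_edist_zero {C : ℕ → NonemptyCompacts Z} {D : NonemptyCompacts Z}
    (hC : Tendsto C atTop (𝓝 D)) :
    Tendsto (fun n => edist (C n) D) atTop (𝓝 0) := by
  rw [EMetric.tendsto_atTop] at hC
  rw [ENNReal.tendsto_atTop_zero]
  intro ε hε
  rcases hC ε hε with ⟨N, hN⟩
  exact ⟨N, fun n hn => (hN n hn).le⟩

lemma mem_of_tendsto' {C : ℕ → NonemptyCompacts Z} {D : NonemptyCompacts Z}
    (hC : Tendsto C atTop (𝓝 D)) {x : ℕ → Z} {y : Z}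
    (hx : ∀ n, x n ∈ (C n : Set Z)) (hxy : Tendsto x atTop (𝓝 y)) :
    y ∈ (D : Set Z) := by
  rw [mem_iff_infEDist_zero_of_closed D.isCompact.isClosed]
  have key : ∀ n, infEDist y (D : Set Z) ≤ edist y (x n) + edist (C n) D := by
    intro n
    calc infEDist y (D : Set Z) ≤ edist y (x n) + infEDist (x n) (D : Set Z) :=
          infEDist_le_edist_add_infEDist
    _ ≤ edist y (x n) + (infEDist (x n) (C n : Set Z) + hausdorffEDist (C n : Set Z) D) :=
          add_le_add_right infEDist_le_infEDist_add_hausdorffEDist _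
    _ = edist y (x n) + edist (C n) D := by
          rw [infEDist_zero_of_mem (hx n), zero_add]; rfl
  have h1 : Tendsto (fun n => edist y (x n)) atTop (𝓝 0) := by
    rw [EMetric.tendsto_atTop] at hxy
    rw [ENNReal.tendsto_atTop_zero]
    intro ε hε
    rcases hxy ε hε with ⟨N, hN⟩
    exact ⟨N, fun n hn => by rw [edist_comm]; exact (hN n hn).le⟩
  have h2 := tendsto_edist_zero hC
  have h0 : Tendsto (fun n => edist y (x n) + edist (C n) D) atTop (𝓝 0) := by
    simpa using h1.add h2
  exact le_antisymm (ge_of_tendsto' h0 key) (zero_le)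

lemma subset_of_tendsto_closed {C : ℕ → NonemptyCompacts Z} {D : NonemptyCompacts Z}
    (hC : Tendsto C atTop (𝓝 D)) {M : Set Z} (hM : IsClosed M)
    (h : ∀ n, (C n : Set Z) ⊆ M) : (D : Set Z) ⊆ M := by
  intro y hy
  rw [mem_iff_infEDist_zero_of_closed hM]
  have key : ∀ n, infEDist y M ≤ edist (C n) D := by
    intro n
    calc infEDist y M ≤ infEDist y (C n : Set Z) := infEDist_anti (h n)
    _ ≤ hausdorffEDist (D : Set Z) (C n : Set Z) := infEDist_le_hausdorffEDist_of_mem hy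
    _ = edist (C n) D := by rw [hausdorffEDist_comm]; rfl
  exact le_antisymm (ge_of_tendsto' (tendsto_edist_zero hC) key) (zero_le)

lemma subset_of_tendsto₂ {C D : ℕ → NonemptyCompacts Z} {A B : NonemptyCompacts Z}
    (hC : Tendsto C atTop (𝓝 A)) (hD : Tendsto D atTop (𝓝 B))
    (h : ∀ n, (C n : Set Z) ⊆ (D n : Set Z)) : (A : Set Z) ⊆ (B : Set Z) := by
  intro y hy
  rw [mem_iff_infEDist_zero_of_closed B.isCompact.isClosed]
  have key : ∀ n, infEDist y (B : Set Z) ≤ edist (C n) A + edist (D n) B := by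
    intro n
    calc infEDist y (B : Set Z)
        ≤ infEDist y (D n : Set Z) + hausdorffEDist (D n : Set Z) B :=
          infEDist_le_infEDist_add_hausdorffEDist
    _ ≤ infEDist y (C n : Set Z) + hausdorffEDist (D n : Set Z) (B : Set Z) :=
          add_le_add_left (infEDist_anti (h n)) _
    _ ≤ hausdorffEDist (A : Set Z) (C n : Set Z) + hausdorffEDist (D n : Set Z) (B : Set Z) :=
          add_le_add_left (infEDist_le_hausdorffEDist_of_mem hy) _
    _ = edist (C n) A + edist (D n) B := by rw [hausdorffEDist_comm]; rfl
  have h0 : Tendsto (fun n => edist (C n) A + edist (D n) B) atTop (𝓝 0) := by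
    simpa using (tendsto_edist_zero hC).add (tendsto_edist_zero hD)
  exact le_antisymm (ge_of_tendsto' h0 key) (zero_le)

lemma isClosed_setOf_isConnected :
    IsClosed {C : NonemptyCompacts Z | IsConnected (C : Set Z)} := by
  refine IsSeqClosed.isClosed ?_
  intro C D hC hCD
  refine ⟨D.nonempty, ?_⟩
  rw [isPreconnected_iff_subset_of_fully_disjoint_closed D.isCompact.isClosed]
  intro u v hu hv hcov hdisj
  by_contra hcon
  push_neg at hcon
  have hA : ((D : Set Z) ∩ u).Nonempty := by
    rcases not_subset.1 hcon.2 with ⟨x, hxD, hxv⟩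
    exact ⟨x, hxD, (hcov hxD).resolve_right hxv⟩
  have hB : ((D : Set Z) ∩ v).Nonempty := by
    rcases not_subset.1 hcon.1 with ⟨x, hxD, hxu⟩
    exact ⟨x, hxD, (hcov hxD).resolve_left hxu⟩
  have hdAB : Disjoint ((D : Set Z) ∩ u) ((D : Set Z) ∩ v) :=
    hdisj.mono inter_subset_right inter_subset_right
  obtain ⟨δ, hδ, hthick⟩ := hdAB.exists_thickenings
    (D.isCompact.inter_right hu) (D.isCompact.isClosed.inter hv)
  have hcov' : (D : Set Z) = ((D : Set Z) ∩ u) ∪ ((D : Set Z) ∩ v) := by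
    rw [← inter_union_distrib_left]
    exact (inter_eq_left.2 hcov).symm
  -- pick n close
  rw [EMetric.tendsto_atTop] at hCD
  obtain ⟨N, hN⟩ := hCD (ENNReal.ofReal δ) (by simpa using hδ)
  have hedist := hN N le_rfl
  -- C N is covered by the two thickenings
  have hsub : (C N : Set Z) ⊆ thickening δ ((D : Set Z) ∩ u) ∪ thickening δ ((D : Set Z) ∩ v) := by
    intro x hxC
    obtain ⟨y, hyD, hxy⟩ := exists_edist_lt_of_hausdorffEDist_lt hxC hedist
    have hxy' : dist x y < δ := edist_lt_ofReal.1 hxy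
    rw [hcov'] at hyD
    rcases hyD with hy | hy
    · exact Or.inl (mem_thickening_iff.2 ⟨y, hy, hxy'⟩)
    · exact Or.inr (mem_thickening_iff.2 ⟨y, hy, hxy'⟩)
  have hmeet : ∀ {S : Set Z}, ((D : Set Z) ∩ S).Nonempty → (S = u ∨ S = v) →
      ((C N : Set Z) ∩ thickening δ ((D : Set Z) ∩ S)).Nonempty := by
    intro S hS _
    obtain ⟨a, haD, haS⟩ := hS
    have : hausdorffEDist (D : Set Z) (C N : Set Z) < ENNReal.ofReal δ := by
      rw [hausdorffEDist_comm]; exact hedist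
    obtain ⟨x, hxC, hax⟩ := exists_edist_lt_of_hausdorffEDist_lt haD this
    refine ⟨x, hxC, mem_thickening_iff.2 ⟨a, ⟨haD, haS⟩, ?_⟩⟩
    rw [dist_comm]
    exact edist_lt_ofReal.1 hax
  obtain ⟨w, hwC, hw1, hw2⟩ := (hC N).isPreconnected _ _ isOpen_thickening isOpen_thickening hsub
    (hmeet hA (Or.inl rfl)) (hmeet hB (Or.inr rfl))
  exact (hthick.le_bot ⟨hw1, hw2⟩)


lemma edist_eq' (A B : NonemptyCompacts Z) :
    edist A B = hausdorffEDist (A : Set Z) (B : Set Z) := rfl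

lemma subc_ext {A B : Subcontinua Z} (h : (A.1 : Set Z) = B.1) : A = B :=
  Subtype.ext (NonemptyCompacts.ext h)

/-- The singleton subcontinuum. -/
def pt (z : Z) : Subcontinua Z :=
  ⟨⟨⟨{z}, isCompact_singleton⟩, Set.singleton_nonempty z⟩, isConnected_singleton⟩

@[simp] lemma pt_coe (z : Z) : ((pt z).1 : Set Z) = {z} := rfl

section Whitney

variable {μ : Subcontinua Z → ℝ} (hμ : IsWhitneyMap μ)

lemma w_lt (hμ : IsWhitneyMap μ) {A B : Subcontinua Z}
    (h : (A.1 : Set Z) ⊆ B.1) (hne : A ≠ B) : μ A < μ B := by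
  refine hμ.2.2 A B (h.ssubset_of_ne ?_)
  exact fun hc => hne (subc_ext hc)

lemma w_mono (hμ : IsWhitneyMap μ) {A B : Subcontinua Z}
    (h : (A.1 : Set Z) ⊆ B.1) : μ A ≤ μ B := by
  rcases eq_or_ne A B with rfl | hne
  · exact le_refl _
  · exact (w_lt hμ h hne).le

lemma w_pt (hμ : IsWhitneyMap μ) (z : Z) : μ (pt z) = 0 :=
  hμ.2.1 _ (by simp [pt])

lemma w_nonneg (hμ : IsWhitneyMap μ) (A : Subcontinua Z) : 0 ≤ μ A := by
  obtain ⟨z, hz⟩ := A.1.nonempty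
  have := w_mono hμ (A := pt z) (B := A) (by simpa using hz)
  rwa [w_pt hμ] at this

lemma w_inj (hμ : IsWhitneyMap μ) {A B : Subcontinua Z}
    (h : (A.1 : Set Z) ⊆ B.1) (hm : μ A = μ B) : A = B := by
  by_contra hne
  exact absurd hm (w_lt hμ h hne).ne

end Whitney

lemma hausdorffEDist_union_le' {s t s' t' : NonemptyCompacts Z} :
    hausdorffEDist ((s : Set Z) ∪ t) ((s' : Set Z) ∪ t') ≤
      max (edist s s') (edist t t') := by
  apply hausdorffEDist_le_of_mem_edist
  · rintro x (hx | hx)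
    · obtain ⟨y, hy, hye⟩ := s'.isCompact.exists_infEDist_eq_edist s'.nonempty x
      refine ⟨y, Or.inl hy, ?_⟩
      rw [← hye]
      exact le_trans (infEDist_le_hausdorffEDist_of_mem hx) (le_max_left _ _)
    · obtain ⟨y, hy, hye⟩ := t'.isCompact.exists_infEDist_eq_edist t'.nonempty x
      refine ⟨y, Or.inr hy, ?_⟩
      rw [← hye]
      exact le_trans (infEDist_le_hausdorffEDist_of_mem hx) (le_max_right _ _)
  · rintro x (hx | hx)
    · obtain ⟨y, hy, hye⟩ := s.isCompact.exists_infEDist_eq_edist s.nonempty x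
      refine ⟨y, Or.inl hy, ?_⟩
      rw [← hye]
      refine le_trans (infEDist_le_hausdorffEDist_of_mem hx) ?_
      rw [hausdorffEDist_comm]
      exact le_max_left _ _
    · obtain ⟨y, hy, hye⟩ := t.isCompact.exists_infEDist_eq_edist t.nonempty x
      refine ⟨y, Or.inr hy, ?_⟩
      rw [← hye]
      refine le_trans (infEDist_le_hausdorffEDist_of_mem hx) ?_
      rw [hausdorffEDist_comm]
      exact le_max_right _ _

lemma continuous_sup :
    Continuous (fun p : NonemptyCompacts Z × NonemptyCompacts Z => p.1 ⊔ p.2) := by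
  have L : LipschitzWith 1 (fun p : NonemptyCompacts Z × NonemptyCompacts Z => p.1 ⊔ p.2) := by
    intro p q
    have h1 : edist (p.1 ⊔ p.2) (q.1 ⊔ q.2) =
        hausdorffEDist (((p.1 : Set Z)) ∪ (p.2 : Set Z)) ((q.1 : Set Z) ∪ (q.2 : Set Z)) := by
      rw [edist_eq', NonemptyCompacts.coe_sup, NonemptyCompacts.coe_sup]
    rw [h1, Prod.edist_eq]
    simpa using hausdorffEDist_union_le' (s := p.1) (t := p.2) (s' := q.1) (t' := q.2)
  exact L.continuous

lemma compactSpace_subcontinua [CompactSpace Z] : CompactSpace (Subcontinua Z) :=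
  isCompact_iff_compactSpace.mp
    ((isClosed_setOf_isConnected (Z := Z)).isCompact)


/-- Boundary bumping, abstract form: in a compact T2 preconnected space, the
connected component of a point of a closed set `K` with nonempty complement
meets the frontier of `K`. -/
lemma bumping {X : Type*} [TopologicalSpace X] [CompactSpace X] [T2Space X]
    [PreconnectedSpace X] {K : Set X} (hK : IsClosed K) {x : X} (hx : x ∈ K)
    (hKc : Kᶜ.Nonempty) :
    (connectedComponentIn K x ∩ frontier K).Nonempty := by
  by_contra hcon
  rw [Set.not_nonempty_iff_eq_empty] at hcon
  haveI : CompactSpace K := isCompact_iff_compactSpace.mp hK.isCompact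
  set x' : K := ⟨x, hx⟩
  have hcomp : connectedComponentIn K x = Subtype.val '' connectedComponent x' :=
    connectedComponentIn_eq_image hx
  have hiInter := connectedComponent_eq_iInter_isClopen x'
  set Fr : Set K := Subtype.val ⁻¹' frontier K with hFr
  have hFrclosed : IsClosed Fr := isClosed_frontier.preimage continuous_subtype_val
  have hFrcompact : IsCompact Fr := hFrclosed.isCompact
  have hempty : (Fr ∩ ⋂ W : { W : Set K // IsClopen W ∧ x' ∈ W }, (W : Set K)) = ∅ := by
    rw [← hiInter]
    rw [Set.eq_empty_iff_forall_notMem]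
    rintro z ⟨hz1, hz2⟩
    have : (z : X) ∈ connectedComponentIn K x ∩ frontier K := by
      rw [hcomp]
      exact ⟨Set.mem_image_of_mem _ hz2, hz1⟩
    rw [hcon] at this
    exact this
  obtain ⟨u, hu⟩ := hFrcompact.elim_finite_subfamily_closed _
    (fun W : { W : Set K // IsClopen W ∧ x' ∈ W } => W.2.1.1) hempty
  set V' : Set K := ⋂ W ∈ u, (W : Set K) with hV'
  have hV'clopen : IsClopen V' := isClopen_biInter_finset (fun W _ => W.2.1)
  have hxV' : x' ∈ V' := Set.mem_iInter₂.2 fun W _ => W.2.2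
  have hV'Fr : V' ∩ Fr = ∅ := by
    rw [Set.eq_empty_iff_forall_notMem]
    rintro z ⟨hz1, hz2⟩
    have : z ∈ Fr ∩ ⋂ W ∈ u, (W : Set K) := ⟨hz2, hz1⟩
    rw [hu] at this
    exact this
  set V : Set X := Subtype.val '' V' with hV
  have hVK : V ⊆ K := by
    rintro _ ⟨z, _, rfl⟩; exact z.2
  have hVFr : ∀ z ∈ V, z ∉ frontier K := by
    rintro _ ⟨z, hz, rfl⟩ hzfr
    have : z ∈ V' ∩ Fr := ⟨hz, hzfr⟩
    rw [hV'Fr] at this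
    exact this
  have hVint : V ⊆ interior K := by
    intro z hz
    have hzK := hVK hz
    have : interior K = K \ frontier K := by
      rw [hK.frontier_eq]
      rw [Set.diff_diff_cancel_left interior_subset]
    rw [this]
    exact ⟨hzK, hVFr z hz⟩
  have hVclosed : IsClosed V :=
    (hV'clopen.isClosed.isCompact.image continuous_subtype_val).isClosed
  have hVopen : IsOpen V := by
    obtain ⟨O, hO, hOeq⟩ := isOpen_induced_iff.1 hV'clopen.isOpen
    have hVOK : V = O ∩ K := by
      rw [hV, ← hOeq, Subtype.image_preimage_coe, Set.inter_comm]
    have : V = O ∩ interior K := by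
      apply Set.Subset.antisymm
      · exact Set.subset_inter (by rw [hVOK]; exact Set.inter_subset_left) hVint
      · rw [hVOK]
        exact Set.inter_subset_inter_right O interior_subset
    rw [this]
    exact hO.inter isOpen_interior
  have hclopen : IsClopen V := ⟨hVclosed, hVopen⟩
  rcases isClopen_iff.1 hclopen with h | h
  · have : x ∈ V := ⟨x', hxV', rfl⟩
    rw [h] at this
    exact this
  · obtain ⟨y, hy⟩ := hKc
    have : y ∈ V := h ▸ Set.mem_univ y
    exact hy (hVK this)


/-- The gap lemma: between a proper nonempty subcontinuum `A` of a continuum `B`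
there is a strictly intermediate subcontinuum. -/
lemma gap {A B : Set Z} (hA : IsCompact A) (hAne : A.Nonempty) (hAconn : IsPreconnected A)
    (hB : IsCompact B) (hBconn : IsPreconnected B) (hAB : A ⊂ B) :
    ∃ F : Set Z, IsCompact F ∧ F.Nonempty ∧ IsPreconnected F ∧ A ⊂ F ∧ F ⊂ B := by
  obtain ⟨b, hbB, hbA⟩ := Set.exists_of_ssubset hAB
  -- find δ > 0 with b far from A
  have hδpos : 0 < infDist b A / 2 := by
    have := (hA.isClosed.notMem_iff_infDist_pos hAne).1 hbA
    linarith
  set δ : ℝ := infDist b A / 2 with hδ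
  have hbnot : b ∉ cthickening δ A := by
    intro hmem
    rw [mem_cthickening_iff] at hmem
    have h1 : infEDist b A ≠ ⊤ := hmem.trans_lt ENNReal.ofReal_lt_top |>.ne
    have h2 : infDist b A ≤ δ := by
      rw [infDist, ← ENNReal.toReal_ofReal hδpos.le]
      exact ENNReal.toReal_mono ENNReal.ofReal_ne_top hmem
    rw [hδ] at h2
    have := (hA.isClosed.notMem_iff_infDist_pos hAne).1 hbA
    linarith
  haveI : CompactSpace B := isCompact_iff_compactSpace.mp hB
  haveI : PreconnectedSpace B := Subtype.preconnectedSpace hBconn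
  set K : Set B := Subtype.val ⁻¹' (cthickening δ A) with hKdef
  have hKclosed : IsClosed K := isClosed_cthickening.preimage continuous_subtype_val
  obtain ⟨a, haA⟩ := hAne
  have haB : a ∈ B := hAB.1 haA
  set a' : B := ⟨a, haB⟩
  have haK : a' ∈ K := self_subset_cthickening A haA
  have hKc : Kᶜ.Nonempty := ⟨⟨b, hbB⟩, fun h => hbnot h⟩
  obtain ⟨p, hpC, hpFr⟩ := bumping hKclosed haK hKc
  set C : Set B := connectedComponentIn K a' with hC
  -- A (pulled back) is inside the component C
  have hAsub : Subtype.val ⁻¹' A ⊆ C := by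
    apply IsPreconnected.subset_connectedComponentIn
    · exact (IsInducing.subtypeVal.isPreconnected_image (s := Subtype.val ⁻¹' A)).mp
        (by rwa [Subtype.image_preimage_coe, Set.inter_eq_right.2 hAB.1])
    · exact haA
    · exact fun z hz => self_subset_cthickening A hz
  have hCcompact : IsCompact C := by
    rw [hC, connectedComponentIn_eq_image haK]
    haveI : CompactSpace K := isCompact_iff_compactSpace.mp hKclosed.isCompact
    exact (isClosed_connectedComponent.isCompact.image continuous_subtype_val)
  refine ⟨Subtype.val '' C, hCcompact.image continuous_subtype_val, ⟨a, a', hAsub haA, rfl⟩,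
    (IsInducing.subtypeVal.isPreconnected_image).mpr isPreconnected_connectedComponentIn, ?_, ?_⟩
  · constructor
    · intro z hz
      exact ⟨⟨z, hAB.1 hz⟩, hAsub hz, rfl⟩
    · intro hsub
      -- p maps into A would contradict p ∈ frontier K
      have hpA : (p : Z) ∈ A := hsub ⟨p, hpC, rfl⟩
      have hpint : p ∈ interior K := by
        have : p ∈ Subtype.val ⁻¹' (thickening δ A) := self_subset_thickening hδpos A hpA
        have hopen : IsOpen (Subtype.val ⁻¹' (thickening δ A) : Set B) :=
          isOpen_thickening.preimage continuous_subtype_val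
        have hsubK : (Subtype.val ⁻¹' (thickening δ A) : Set B) ⊆ K :=
          Set.preimage_mono (thickening_subset_cthickening δ A)
        exact (hopen.subset_interior_iff.mpr hsubK) this
      exact (hpFr.2 hpint).elim
  · constructor
    · rintro _ ⟨z, _, rfl⟩; exact z.2
    · intro hsub
      obtain ⟨z, hzC, hzb⟩ := hsub hbB
      have : z ∈ K := connectedComponentIn_subset K a' hzC
      rw [hKdef, Set.mem_preimage, hzb] at this
      exact hbnot this


section Chain

variable [CompactSpace Z] {μ : Subcontinua Z → ℝ}

lemma exists_chain (hμ : IsWhitneyMap μ) (B : Subcontinua Z) {x0 : Z}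
    (hx0 : x0 ∈ (B.1 : Set Z)) :
    ∃ γ : ℝ → Subcontinua Z,
      Continuous γ ∧
      (∀ r, x0 ∈ ((γ r).1 : Set Z) ∧ ((γ r).1 : Set Z) ⊆ B.1) ∧
      (∀ r ∈ Icc (0:ℝ) (μ B), μ (γ r) = r) ∧
      (∀ r r', r ≤ r' → ((γ r).1 : Set Z) ⊆ (γ r').1) ∧
      γ 0 = pt x0 ∧ γ (μ B) = B := by
  haveI : CompactSpace (Subcontinua Z) := compactSpace_subcontinua
  have hptB : ((pt x0).1 : Set Z) ⊆ B.1 := by simpa using hx0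
  have hμB0 : (0:ℝ) ≤ μ B := w_nonneg hμ B
  -- the ambient poset
  set P : Set (Subcontinua Z) := {C | x0 ∈ (C.1 : Set Z) ∧ (C.1 : Set Z) ⊆ B.1} with hP
  have hptP : pt x0 ∈ P := ⟨rfl, hptB⟩
  have hBP : B ∈ P := ⟨hx0, subset_rfl⟩
  -- a maximal chain in P through pt x0 and B
  set ord : ↥P → ↥P → Prop := fun C D => ((C : Subcontinua Z).1 : Set Z) ⊆ (D : Subcontinua Z).1
    with hord
  have hc0 : IsChain ord {(⟨pt x0, hptP⟩ : ↥P), ⟨B, hBP⟩} := by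
    intro C hC D hD hne
    rcases hC with rfl | hC
    · rcases hD with rfl | hD
      · exact absurd rfl hne
      · rw [Set.mem_singleton_iff] at hD
        subst hD
        exact Or.inl hptB
    · rw [Set.mem_singleton_iff] at hC
      subst hC
      rcases hD with rfl | hD
      · exact Or.inr hptB
      · rw [Set.mem_singleton_iff] at hD
        subst hD
        exact absurd rfl hne
  obtain ⟨M, hMmax, hc0M⟩ := hc0.exists_maxChain
  set S : Set (Subcontinua Z) := Subtype.val '' M with hS
  have hSP : S ⊆ P := by rintro _ ⟨C, _, rfl⟩; exact C.2
  have hSchain : ∀ C ∈ S, ∀ D ∈ S, (C.1 : Set Z) ⊆ D.1 ∨ (D.1 : Set Z) ⊆ C.1 := by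
    rintro _ ⟨C, hC, rfl⟩ _ ⟨D, hD, rfl⟩
    rcases eq_or_ne C D with rfl | hne
    · exact Or.inl subset_rfl
    · exact hMmax.1 hC hD hne
  have hSmax : ∀ C ∈ P, (∀ D ∈ S, (C.1 : Set Z) ⊆ D.1 ∨ (D.1 : Set Z) ⊆ C.1) → C ∈ S := by
    intro C hCP hcomp
    by_contra hCS
    have hchain : IsChain ord (insert (⟨C, hCP⟩ : ↥P) M) := by
      refine hMmax.1.insert ?_
      intro D hD _
      exact hcomp D.1 ⟨D, hD, rfl⟩
    have := hMmax.2 hchain (Set.subset_insert _ _)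
    apply hCS
    rw [hS, this]
    exact ⟨_, Set.mem_insert _ _, rfl⟩
  have hptS : pt x0 ∈ S := by
    apply hSmax _ hptP
    intro D hD
    exact Or.inl (by simpa using (hSP hD).1)
  have hBS : B ∈ S := by
    apply hSmax _ hBP
    intro D hD
    exact Or.inr (hSP hD).2
  have hSclosed : IsClosed S := by
    apply IsSeqClosed.isClosed
    intro Cn C hCn hlim
    have hlim' : Tendsto (fun n => (Cn n).1) atTop (𝓝 C.1) :=
      ((continuous_subtype_val.tendsto C).comp hlim)
    apply hSmax
    · constructor
      · exact mem_of_tendsto' hlim' (fun n => (hSP (hCn n)).1) tendsto_const_nhds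
      · exact subset_of_tendsto_closed hlim' B.1.isCompact.isClosed (fun n => (hSP (hCn n)).2)
    · intro D hD
      by_cases hfreq : ∃ᶠ n in atTop, ((Cn n).1 : Set Z) ⊆ D.1
      · obtain ⟨φ, hφmono, hφ⟩ := Filter.extraction_of_frequently_atTop hfreq
        exact Or.inl (subset_of_tendsto_closed (hlim'.comp hφmono.tendsto_atTop)
          D.1.isCompact.isClosed hφ)
      · rw [Filter.not_frequently] at hfreq
        rw [Filter.eventually_atTop] at hfreq
        obtain ⟨N, hN⟩ := hfreq
        have hDC : ∀ n, (D.1 : Set Z) ⊆ (Cn (n + N)).1 := by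
          intro n
          rcases hSchain _ (hCn (n + N)) _ hD with h | h
          · exact absurd h (hN (n + N) (Nat.le_add_left _ _))
          · exact h
        refine Or.inr (subset_of_tendsto₂ (C := fun _ => D.1)
          (D := fun n => (Cn (n + N)).1) tendsto_const_nhds ?_ hDC)
        exact hlim'.comp (tendsto_add_atTop_nat N)
  have hbounds : ∀ C ∈ S, μ C ∈ Icc (0:ℝ) (μ B) := by
    intro C hC
    constructor
    · exact w_nonneg hμ C
    · exact w_mono hμ (hSP hC).2
  have hScompact : IsCompact S := hSclosed.isCompact
  -- μ is surjective from S onto [0, μ B]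
  have hsurj : ∀ r ∈ Icc (0:ℝ) (μ B), ∃ C, C ∈ S ∧ μ C = r := by
    intro r hr
    by_contra hcon
    push_neg at hcon
    have hne : ∀ C ∈ S, μ C ≠ r := hcon
    have hdichot : ∀ C ∈ S, μ C < r ∨ r < μ C := by
      intro C hC
      rcases lt_trichotomy (μ C) r with h | h | h
      · exact Or.inl h
      · exact absurd h (hne C hC)
      · exact Or.inr h
    set Sm : Set (Subcontinua Z) := {C ∈ S | μ C < r} with hSm
    set Sp : Set (Subcontinua Z) := {C ∈ S | r < μ C} with hSp
    have hptSm : pt x0 ∈ Sm := by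
      refine ⟨hptS, ?_⟩
      rw [w_pt hμ]
      rcases hr.1.lt_or_eq with h | h
      · exact h
      · exact absurd ((w_pt hμ x0).trans h) (hne _ hptS)
    have hBSp : B ∈ Sp := by
      refine ⟨hBS, ?_⟩
      rcases hr.2.lt_or_eq with h | h
      · exact h
      · exact absurd h.symm (hne _ hBS)
    -- the set D: closure of the union of Sm
    set Uset : Set Z := ⋃ C ∈ Sm, (C.1 : Set Z) with hUset
    have hx0U : x0 ∈ Uset := Set.mem_biUnion hptSm rfl
    have hUconn : IsPreconnected Uset := by
      rw [hUset, ← Set.sUnion_image]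
      apply isPreconnected_sUnion x0
      · rintro _ ⟨C, hC, rfl⟩
        exact (hSP hC.1).1
      · rintro _ ⟨C, hC, rfl⟩
        exact C.2.isPreconnected
    have hUB : Uset ⊆ (B.1 : Set Z) := by
      rintro z hz
      obtain ⟨C, hC, hzC⟩ := Set.mem_iUnion₂.1 hz
      exact (hSP hC.1).2 hzC
    set Dset : Set Z := closure Uset with hDset
    have hDcompact : IsCompact Dset := isClosed_closure.isCompact
    have hDconn : IsConnected Dset :=
      ⟨⟨x0, subset_closure hx0U⟩, hUconn.closure⟩
    set DD : Subcontinua Z := ⟨⟨⟨Dset, hDcompact⟩, hDconn.1⟩, hDconn⟩ with hDD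
    have hDP : DD ∈ P := ⟨subset_closure hx0U,
      B.1.isCompact.isClosed.closure_subset_iff.2 hUB⟩
    have hDub : ∀ C ∈ Sm, (C.1 : Set Z) ⊆ Dset := by
      intro C hC z hz
      exact subset_closure (Set.mem_biUnion hC hz)
    have hDlb : ∀ G ∈ S, r < μ G → Dset ⊆ (G.1 : Set Z) := by
      intro G hG hrG
      rw [hDset]
      rw [G.1.isCompact.isClosed.closure_subset_iff]
      intro z hz
      obtain ⟨C, hC, hzC⟩ := Set.mem_iUnion₂.1 hz
      rcases hSchain C hC.1 G hG with h | h
      · exact h hzC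
      · exact ((not_lt.2 hrG.le) ((w_mono hμ h).trans_lt hC.2)).elim
    have hDS : DD ∈ S := by
      apply hSmax _ hDP
      intro G hG
      rcases hdichot G hG with h | h
      · exact Or.inr (hDub G ⟨hG, h⟩)
      · exact Or.inl (hDlb G hG h)
    -- approximation of D from below
    have happroxD : ∀ ε : ℝ, 0 < ε → ∃ C ∈ Sm, dist DD.1 C.1 ≤ ε := by
      intro ε hε
      have hcover : Dset ⊆ ⋃ i : ↥Sm, thickening ε ((i : Subcontinua Z).1 : Set Z) := by
        intro x hx
        have := closure_subset_thickening hε Uset hx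
        rw [mem_thickening_iff] at this
        obtain ⟨z, hzU, hdz⟩ := this
        obtain ⟨C, hC, hzC⟩ := Set.mem_iUnion₂.1 hzU
        exact Set.mem_iUnion.2 ⟨⟨C, hC⟩, mem_thickening_iff.2 ⟨z, hzC, hdz⟩⟩
      obtain ⟨t, ht⟩ := hDcompact.elim_finite_subcover _
        (fun i => isOpen_thickening) hcover
      have htne : t.Nonempty := by
        by_contra hte
        rw [Finset.not_nonempty_iff_eq_empty] at hte
        have := ht (subset_closure hx0U)
        simp [hte] at this
      obtain ⟨imax, himax, hmax⟩ := t.exists_max_image (fun i => μ (i : Subcontinua Z)) htne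
      have hsub : ∀ i ∈ t, ((i : Subcontinua Z).1 : Set Z) ⊆ (imax : Subcontinua Z).1 := by
        intro i hi
        rcases hSchain _ i.2.1 _ imax.2.1 with h | h
        · exact h
        · rw [w_inj hμ h (le_antisymm (w_mono hμ h) (hmax i hi))]
      have hDth : Dset ⊆ thickening ε ((imax : Subcontinua Z).1 : Set Z) := by
        intro x hx
        obtain ⟨i, hi⟩ := Set.mem_iUnion.1 (ht hx)
        simp only [Set.mem_iUnion] at hi
        obtain ⟨hit, hx'⟩ := hi
        exact thickening_subset_of_subset ε (hsub i hit) hx'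
      refine ⟨imax, imax.2, ?_⟩
      have hed : edist DD.1 (imax : Subcontinua Z).1 ≤ ENNReal.ofReal ε := by
        apply hausdorffEDist_le_of_mem_edist
        · intro x hx
          obtain ⟨y, hy, hxy⟩ := mem_thickening_iff.1 (hDth hx)
          exact ⟨y, hy, (edist_lt_ofReal.2 hxy).le⟩
        · intro y hy
          exact ⟨y, hDub _ imax.2 hy, by simp⟩
      rw [dist_edist]
      calc (edist DD.1 (imax : Subcontinua Z).1).toReal
          ≤ (ENNReal.ofReal ε).toReal := ENNReal.toReal_mono ENNReal.ofReal_ne_top hed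
        _ = ε := ENNReal.toReal_ofReal hε.le
    have hμD : μ DD < r := by
      have hseq : ∀ n : ℕ, ∃ C, C ∈ Sm ∧ dist DD.1 C.1 ≤ 1 / (n + 1) := by
        intro n
        obtain ⟨C, hC, hd⟩ := happroxD (1 / (n + 1)) (by positivity)
        exact ⟨C, hC, hd⟩
      choose f hf1 hf2 using hseq
      have hft : Tendsto f atTop (𝓝 DD) := by
        rw [tendsto_subtype_rng]
        rw [tendsto_iff_dist_tendsto_zero]
        apply squeeze_zero (g := fun n : ℕ => 1 / (n + 1)) (fun n => dist_nonneg)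
          (fun n => by rw [dist_comm]; exact hf2 n)
        exact tendsto_one_div_add_atTop_nhds_zero_nat
      have hμf : Tendsto (fun n => μ (f n)) atTop (𝓝 (μ DD)) :=
        (hμ.1.tendsto DD).comp hft
      have hle : μ DD ≤ r := le_of_tendsto hμf
        (Filter.Eventually.of_forall fun n => (hf1 n).2.le)
      exact lt_of_le_of_ne hle (hne _ hDS)
    -- the set E: intersection of Sp
    haveI hSpne : Nonempty ↥Sp := ⟨⟨B, hBSp⟩⟩
    set Eset : Set Z := ⋂ i : ↥Sp, ((i : Subcontinua Z).1 : Set Z) with hEset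
    have hEclosed : IsClosed Eset :=
      isClosed_iInter fun i => (i : Subcontinua Z).1.isCompact.isClosed
    have hEcompact : IsCompact Eset := hEclosed.isCompact
    have hx0E : x0 ∈ Eset := Set.mem_iInter.2 fun i => (hSP i.2.1).1
    have hElb : ∀ C ∈ Sp, Eset ⊆ (C.1 : Set Z) := by
      intro C hC z hz
      exact Set.mem_iInter.1 hz ⟨C, hC⟩
    -- shrink: any open set containing Eset contains some member of the chain Sp
    have hshrink : ∀ W : Set Z, IsOpen W → Eset ⊆ W →
        ∃ C ∈ Sp, ((C : Subcontinua Z).1 : Set Z) ⊆ W := by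
      intro W hW hEW
      by_contra hcon2
      push_neg at hcon2
      have hne2 : ∀ i : ↥Sp, (((i : Subcontinua Z).1 : Set Z) \ W).Nonempty := by
        intro i
        rcases Set.not_subset.1 (hcon2 i i.2) with ⟨z, hz1, hz2⟩
        exact ⟨z, hz1, hz2⟩
      have hdir : Directed (· ⊇ ·)
          (fun i : ↥Sp => ((i : Subcontinua Z).1 : Set Z) \ W) := by
        intro i j
        rcases hSchain _ i.2.1 _ j.2.1 with h | h
        · exact ⟨i, subset_rfl, Set.diff_subset_diff_left h⟩
        · exact ⟨j, Set.diff_subset_diff_left h, subset_rfl⟩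
      obtain ⟨z, hz⟩ := IsCompact.nonempty_iInter_of_directed_nonempty_isCompact_isClosed
        _ hdir hne2
        (fun i => ((i : Subcontinua Z).1.isCompact.diff hW))
        (fun i => ((i : Subcontinua Z).1.isCompact.isClosed.sdiff hW))
      have hzE : z ∈ Eset := Set.mem_iInter.2 fun i => (Set.mem_iInter.1 hz i).1
      exact (Set.mem_iInter.1 hz ⟨B, hBSp⟩).2 (hEW hzE)
    have hEconn : IsPreconnected Eset := by
      rw [isPreconnected_iff_subset_of_fully_disjoint_closed hEclosed]
      intro u v hu hv hcov hdisj
      by_contra hcon2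
      push_neg at hcon2
      have hA' : (Eset ∩ u).Nonempty := by
        rcases Set.not_subset.1 hcon2.2 with ⟨x, hxE, hxv⟩
        exact ⟨x, hxE, (hcov hxE).resolve_right hxv⟩
      have hB' : (Eset ∩ v).Nonempty := by
        rcases Set.not_subset.1 hcon2.1 with ⟨x, hxE, hxu⟩
        exact ⟨x, hxE, (hcov hxE).resolve_left hxu⟩
      have hdAB : Disjoint (Eset ∩ u) (Eset ∩ v) :=
        hdisj.mono Set.inter_subset_right Set.inter_subset_right
      obtain ⟨δ, hδ, hthick⟩ := hdAB.exists_thickenings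
        (hEcompact.inter_right hu) (hEclosed.inter hv)
      have hEsubW : Eset ⊆ thickening δ (Eset ∩ u) ∪ thickening δ (Eset ∩ v) := by
        intro x hx
        rcases hcov hx with h | h
        · exact Or.inl (self_subset_thickening hδ _ ⟨hx, h⟩)
        · exact Or.inr (self_subset_thickening hδ _ ⟨hx, h⟩)
      obtain ⟨C, hCSp, hCW⟩ := hshrink _ (isOpen_thickening.union isOpen_thickening) hEsubW
      obtain ⟨a', ha'⟩ := hA'
      obtain ⟨b', hb'⟩ := hB'
      obtain ⟨w, _, hw1, hw2⟩ := C.2.isPreconnected _ _ isOpen_thickening isOpen_thickening hCW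
        ⟨a', hElb C hCSp ha'.1, self_subset_thickening hδ _ ha'⟩
        ⟨b', hElb C hCSp hb'.1, self_subset_thickening hδ _ hb'⟩
      exact hthick.le_bot ⟨hw1, hw2⟩
    set EE : Subcontinua Z := ⟨⟨⟨Eset, hEcompact⟩, ⟨x0, hx0E⟩⟩, ⟨⟨x0, hx0E⟩, hEconn⟩⟩ with hEE
    have hEP : EE ∈ P := ⟨hx0E, (hElb B hBSp)⟩
    have hES : EE ∈ S := by
      apply hSmax _ hEP
      intro G hG
      rcases hdichot G hG with h | h
      · refine Or.inr ?_
        intro z hz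
        show z ∈ Eset
        refine Set.mem_iInter.2 fun i => ?_
        rcases hSchain G hG _ i.2.1 with hh | hh
        · exact hh hz
        · exact ((not_lt.2 i.2.2.le) ((w_mono hμ hh).trans_lt h)).elim
      · exact Or.inl (hElb G ⟨hG, h⟩)
    -- approximation of E from above
    have happroxE : ∀ ε : ℝ, 0 < ε → ∃ C ∈ Sp, dist EE.1 C.1 ≤ ε := by
      intro ε hε
      obtain ⟨C, hCSp, hCth⟩ := hshrink (thickening ε Eset) isOpen_thickening
        (self_subset_thickening hε Eset)
      refine ⟨C, hCSp, ?_⟩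
      have hed : edist EE.1 C.1 ≤ ENNReal.ofReal ε := by
        apply hausdorffEDist_le_of_mem_edist
        · intro x hx
          exact ⟨x, hElb C hCSp hx, by simp⟩
        · intro y hy
          obtain ⟨x, hx, hxy⟩ := mem_thickening_iff.1 (hCth hy)
          exact ⟨x, hx, (edist_lt_ofReal.2 hxy).le⟩
      rw [dist_edist]
      calc (edist EE.1 C.1).toReal
          ≤ (ENNReal.ofReal ε).toReal := ENNReal.toReal_mono ENNReal.ofReal_ne_top hed
        _ = ε := ENNReal.toReal_ofReal hε.le
    have hμE : r < μ EE := by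
      have hseq : ∀ n : ℕ, ∃ C, C ∈ Sp ∧ dist EE.1 C.1 ≤ 1 / (n + 1) := by
        intro n
        obtain ⟨C, hC, hd⟩ := happroxE (1 / (n + 1)) (by positivity)
        exact ⟨C, hC, hd⟩
      choose f hf1 hf2 using hseq
      have hft : Tendsto f atTop (𝓝 EE) := by
        rw [tendsto_subtype_rng]
        rw [tendsto_iff_dist_tendsto_zero]
        apply squeeze_zero (g := fun n : ℕ => 1 / (n + 1)) (fun n => dist_nonneg)
          (fun n => by rw [dist_comm]; exact hf2 n)
        exact tendsto_one_div_add_atTop_nhds_zero_nat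
      have hμf : Tendsto (fun n => μ (f n)) atTop (𝓝 (μ EE)) :=
        (hμ.1.tendsto EE).comp hft
      have hle : r ≤ μ EE := ge_of_tendsto hμf
        (Filter.Eventually.of_forall fun n => (hf1 n).2.le)
      exact lt_of_le_of_ne' hle (hne _ hES)
    -- D is strictly between ... use the gap lemma
    have hDE : Dset ⊂ Eset := by
      constructor
      · rcases hSchain DD hDS EE hES with h | h
        · exact h
        · exact ((not_lt.2 hμE.le) ((w_mono hμ h).trans_lt hμD)).elim
      · intro hsub
        have : μ EE ≤ μ DD := w_mono hμ hsub
        exact absurd (hμD.trans hμE) (not_lt.2 this)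
    obtain ⟨F, hFcomp, hFne, hFconn, hDF, hFE⟩ :=
      gap hDcompact hDconn.1 hDconn.2 hEcompact hEconn hDE
    set FF : Subcontinua Z := ⟨⟨⟨F, hFcomp⟩, hFne⟩, ⟨hFne, hFconn⟩⟩ with hFF
    have hFP : FF ∈ P := ⟨hDF.1 (subset_closure hx0U), hFE.1.trans (hElb B hBSp)⟩
    have hFS : FF ∈ S := by
      apply hSmax _ hFP
      intro G hG
      rcases hdichot G hG with h | h
      · exact Or.inr ((hDub G ⟨hG, h⟩).trans hDF.1)
      · exact Or.inl (hFE.1.trans (hElb G ⟨hG, h⟩))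
    rcases hdichot FF hFS with h | h
    · exact hDF.2 (hDub FF ⟨hFS, h⟩)
    · exact hFE.2 (hElb FF ⟨hFS, h⟩)
  -- the clamping function
  set c : ℝ → ℝ := fun r => max 0 (min r (μ B)) with hc
  have hcmem : ∀ r, c r ∈ Icc (0:ℝ) (μ B) :=
    fun r => ⟨le_max_left _ _, max_le hμB0 (min_le_right _ _)⟩
  have hcid : ∀ r ∈ Icc (0:ℝ) (μ B), c r = r := by
    intro r hr
    rw [hc]
    simp only [min_eq_left hr.2, max_eq_right hr.1]
  have hccont : Continuous c := by
    apply continuous_const.max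
    exact continuous_id.min continuous_const
  have hcmono : Monotone c := fun r r' h =>
    max_le_max le_rfl (min_le_min h le_rfl)
  -- the selection
  set γ : ℝ → Subcontinua Z := fun r => Classical.choose (hsurj (c r) (hcmem r)) with hγ
  have hγspec : ∀ r, γ r ∈ S ∧ μ (γ r) = c r :=
    fun r => Classical.choose_spec (hsurj (c r) (hcmem r))
  have hγeq : ∀ C ∈ S, ∀ r, μ C = c r → γ r = C := by
    intro C hC r hμC
    rcases hSchain _ (hγspec r).1 _ hC with h | h
    · exact w_inj hμ h ((hγspec r).2.trans hμC.symm)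
    · exact (w_inj hμ h (hμC.trans (hγspec r).2.symm)).symm
  have hγmono : ∀ r r', r ≤ r' → ((γ r).1 : Set Z) ⊆ (γ r').1 := by
    intro r r' hrr
    rcases hSchain _ (hγspec r).1 _ (hγspec r').1 with h | h
    · exact h
    · have h1 : μ (γ r') ≤ μ (γ r) := w_mono hμ h
      rw [(hγspec r).2, (hγspec r').2] at h1
      have h2 : c r = c r' := le_antisymm (hcmono hrr) h1
      rw [hγeq _ (hγspec r).1 r' ((hγspec r).2.trans h2)]
  have hγcont : Continuous γ := by
    apply continuous_iff_seqContinuous.2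
    intro u r hu
    by_contra hnot
    rw [Metric.tendsto_atTop] at hnot
    push_neg at hnot
    obtain ⟨ε, hε, hfreq⟩ := hnot
    have hfreq' : ∀ N, ∃ n > N, ε ≤ dist (γ (u n)) (γ r) := by
      intro N
      obtain ⟨n, hn1, hn2⟩ := hfreq (N + 1)
      exact ⟨n, hn1, hn2⟩
    obtain ⟨φ, hφmono, hφ⟩ := Nat.exists_strictMono_subsequence hfreq'
    obtain ⟨L, hLS, ψ, hψmono, hψlim⟩ := hScompact.tendsto_subseq
      (x := fun n => γ (u (φ n))) (fun n => (hγspec _).1)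
    have hcu : Tendsto (fun n => c (u (φ (ψ n)))) atTop (𝓝 (c r)) :=
      (hccont.tendsto r).comp (hu.comp ((hφmono.comp hψmono).tendsto_atTop))
    have hμL : Tendsto (fun n => μ (γ (u (φ (ψ n))))) atTop (𝓝 (μ L)) :=
      (hμ.1.tendsto L).comp hψlim
    have hμL' : μ L = c r := by
      have : (fun n => μ (γ (u (φ (ψ n))))) = fun n => c (u (φ (ψ n))) := by
        funext n
        exact (hγspec _).2
      rw [this] at hμL
      exact tendsto_nhds_unique hμL hcu
    have hLγ : L = γ r := (hγeq L hLS r hμL').symm ▸ rfl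
    have hdist : Tendsto (fun n => dist (γ (u (φ (ψ n)))) (γ r)) atTop
        (𝓝 (dist L (γ r))) := (continuous_dist.tendsto _).comp (hψlim.prodMk_nhds tendsto_const_nhds)
    rw [hLγ, dist_self] at hdist
    have : ε ≤ (0:ℝ) := ge_of_tendsto hdist
      (Filter.Eventually.of_forall fun n => hφ (ψ n))
    linarith
  refine ⟨γ, hγcont, ?_, ?_, hγmono, ?_, ?_⟩
  · intro r
    exact ⟨(hSP (hγspec r).1).1, (hSP (hγspec r).1).2⟩
  · intro r hr
    rw [(hγspec r).2, hcid r hr]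
  · apply hγeq _ hptS
    rw [w_pt hμ, hc]
    simp [hμB0]
  · apply hγeq _ hBS
    rw [hcid _ ⟨hμB0, le_rfl⟩]

end Chain

/-- Connectivity of the level set of a coordinatewise-monotone function on a square. -/
lemma levelset_preconnected {s t : ℝ} (hs : 0 ≤ s) (f : ℝ × ℝ → ℝ)
    (hf : ContinuousOn f (Icc 0 s ×ˢ Icc 0 s))
    (hmono : ∀ p q : ℝ × ℝ, p.1 ≤ q.1 → p.2 ≤ q.2 → f p ≤ f q)
    (hlow : ∀ x ∈ Icc (0:ℝ) s, f (x, 0) ≤ t)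
    (hhigh : ∀ x ∈ Icc (0:ℝ) s, t ≤ f (x, s)) :
    IsPreconnected {p : ℝ × ℝ | p ∈ Icc (0:ℝ) s ×ˢ Icc (0:ℝ) s ∧ f p = t} := by
  set Q : Set (ℝ × ℝ) := Icc (0:ℝ) s ×ˢ Icc (0:ℝ) s with hQ
  have hQclosed : IsClosed Q := (isClosed_Icc.prod isClosed_Icc)
  have hQcompact : IsCompact Q := (isCompact_Icc.prod isCompact_Icc)
  set T : Set (ℝ × ℝ) := {p | p ∈ Q ∧ f p = t} with hT
  have hTQ : T = Q ∩ f ⁻¹' {t} := by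
    ext p; exact ⟨fun h => ⟨h.1, h.2⟩, fun h => ⟨h.1, h.2⟩⟩
  have hTclosed : IsClosed T := by
    rw [hTQ]
    exact hf.preimage_isClosed_of_isClosed hQclosed isClosed_singleton
  have hTcompact : IsCompact T := hQcompact.of_isClosed_subset hTclosed (by rw [hTQ]; exact Set.inter_subset_left)
  -- each vertical slice of T is nonempty
  have hslice_ne : ∀ x ∈ Icc (0:ℝ) s, ∃ y ∈ Icc (0:ℝ) s, (x, y) ∈ T := by
    intro x hx
    have hg : ContinuousOn (fun y => f (x, y)) (Icc (0:ℝ) s) := by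
      apply hf.comp (Continuous.continuousOn (by continuity))
      intro y hy
      exact ⟨hx, hy⟩
    have : t ∈ Icc (f (x, 0)) (f (x, s)) := ⟨hlow x hx, hhigh x hx⟩
    obtain ⟨y, hy, hfy⟩ := intermediate_value_Icc hs hg this
    exact ⟨y, hy, ⟨hx, hy⟩, hfy⟩
  -- each vertical slice is preconnected (as a subset of the plane)
  have hslice_pc : ∀ x : ℝ, IsPreconnected {p : ℝ × ℝ | p ∈ T ∧ p.1 = x} := by
    intro x
    have hord : Set.OrdConnected {y : ℝ | (x, y) ∈ T} := by
      constructor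
      rintro y1 ⟨hq1, hf1⟩ y2 ⟨hq2, hf2⟩ y hy
      have hyI : y ∈ Icc (0:ℝ) s := ⟨hq1.2.1.trans hy.1, hy.2.trans hq2.2.2⟩
      refine ⟨⟨hq1.1, hyI⟩, le_antisymm ?_ ?_⟩
      · rw [← hf2]; exact hmono (x, y) (x, y2) le_rfl hy.2
      · rw [← hf1]; exact hmono (x, y1) (x, y) le_rfl hy.1
    have himg : {p : ℝ × ℝ | p ∈ T ∧ p.1 = x} = (fun y => (x, y)) '' {y : ℝ | (x, y) ∈ T} := by
      ext p
      constructor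
      · rintro ⟨hp, rfl⟩
        exact ⟨p.2, hp, rfl⟩
      · rintro ⟨y, hy, rfl⟩
        exact ⟨hy, rfl⟩
    rw [himg]
    exact hord.isPreconnected.image _ (Continuous.continuousOn (by continuity))
  -- now the separation argument
  intro u v hu hv hcov hTu hTv
  by_contra hempty
  rw [Set.not_nonempty_iff_eq_empty] at hempty
  set A : Set (ℝ × ℝ) := T \ v with hA
  set Bs : Set (ℝ × ℝ) := T \ u with hBs
  have hAclosed : IsClosed A := hTclosed.sdiff hv
  have hBclosed : IsClosed Bs := hTclosed.sdiff hu
  have hABcover : T ⊆ A ∪ Bs := by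
    intro p hp
    by_cases hpv : p ∈ v
    · refine Or.inr ⟨hp, fun hpu => ?_⟩
      have : p ∈ T ∩ (u ∩ v) := ⟨hp, hpu, hpv⟩
      rw [hempty] at this
      exact this
    · exact Or.inl ⟨hp, hpv⟩
  have hABdisj : A ∩ Bs = ∅ := by
    rw [Set.eq_empty_iff_forall_notMem]
    rintro p ⟨⟨hp, hpv⟩, ⟨_, hpu⟩⟩
    rcases hcov hp with h | h
    · exact hpu h
    · exact hpv h
  -- slices lie in A or in Bs
  have hdichot : ∀ x : ℝ, {p : ℝ × ℝ | p ∈ T ∧ p.1 = x} ⊆ A ∨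
      {p : ℝ × ℝ | p ∈ T ∧ p.1 = x} ⊆ Bs := by
    intro x
    have hclosed_slice : IsClosed {p : ℝ × ℝ | p ∈ T ∧ p.1 = x} := by
      have : {p : ℝ × ℝ | p ∈ T ∧ p.1 = x} = T ∩ {p | p.1 = x} := rfl
      rw [this]
      exact hTclosed.inter (isClosed_singleton.preimage continuous_fst)
    exact (isPreconnected_iff_subset_of_fully_disjoint_closed hclosed_slice).1 (hslice_pc x)
      A Bs hAclosed hBclosed (fun p hp => hABcover hp.1)
      (Set.disjoint_iff_inter_eq_empty.2 hABdisj)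
  set RA : Set ℝ := Prod.fst '' A with hRA
  set RB : Set ℝ := Prod.fst '' Bs with hRB
  have hRAclosed : IsClosed RA :=
    ((hTcompact.of_isClosed_subset hAclosed Set.diff_subset).image continuous_fst).isClosed
  have hRBclosed : IsClosed RB :=
    ((hTcompact.of_isClosed_subset hBclosed Set.diff_subset).image continuous_fst).isClosed
  have hcover2 : Icc (0:ℝ) s ⊆ RA ∪ RB := by
    intro x hx
    obtain ⟨y, _, hyT⟩ := hslice_ne x hx
    rcases hABcover hyT with h | h
    · exact Or.inl ⟨(x, y), h, rfl⟩
    · exact Or.inr ⟨(x, y), h, rfl⟩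
  have hdisj2 : Disjoint RA RB := by
    rw [Set.disjoint_iff_inter_eq_empty, Set.eq_empty_iff_forall_notMem]
    rintro x ⟨⟨p, hpA, hpx⟩, ⟨q, hqB, hqx⟩⟩
    rcases hdichot x with h | h
    · have : q ∈ A := h ⟨hqB.1, hqx⟩
      have : q ∈ A ∩ Bs := ⟨this, hqB⟩
      rw [hABdisj] at this
      exact this
    · have : p ∈ Bs := h ⟨hpA.1, hpx⟩
      have : p ∈ A ∩ Bs := ⟨hpA, this⟩
      rw [hABdisj] at this
      exact this
  have hAne : A.Nonempty := by
    obtain ⟨p, hpT, hpu⟩ := hTu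
    refine ⟨p, hpT, fun hpv => ?_⟩
    have : p ∈ T ∩ (u ∩ v) := ⟨hpT, hpu, hpv⟩
    rw [hempty] at this
    exact this
  have hBne : Bs.Nonempty := by
    obtain ⟨p, hpT, hpv⟩ := hTv
    refine ⟨p, hpT, fun hpu => ?_⟩
    have : p ∈ T ∩ (u ∩ v) := ⟨hpT, hpu, hpv⟩
    rw [hempty] at this
    exact this
  rcases (isPreconnected_iff_subset_of_fully_disjoint_closed isClosed_Icc).1
    isPreconnected_Icc RA RB hRAclosed hRBclosed hcover2 hdisj2 with h | h
  · obtain ⟨q, hqB⟩ := hBne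
    have hq1 : q.1 ∈ RA := h (hqB.1.1.1)
    exact hdisj2.le_bot ⟨hq1, ⟨q, hqB, rfl⟩⟩
  · obtain ⟨p, hpA⟩ := hAne
    have hp1 : p.1 ∈ RB := h (hpA.1.1.1)
    exact hdisj2.le_bot ⟨⟨p, hpA, rfl⟩, hp1⟩

section Level

variable [CompactSpace Z] {μ : Subcontinua Z → ℝ}

lemma level_halves (hμ : IsWhitneyMap μ) (M : Subcontinua Z) (s : ℝ) (hs0 : 0 ≤ s)
    (K : Subcontinua Z) (hKM : (K.1 : Set Z) ⊆ M.1) (hμK : μ K = s)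
    {x1 : Z} (hx1M : x1 ∈ (M.1 : Set Z)) (hx1K : x1 ∉ (K.1 : Set Z)) :
    IsCompact {C : Subcontinua Z | μ C = s ∧ (C.1 : Set Z) ⊆ (M.1 : Set Z)} ∧
    IsConnected {C : Subcontinua Z | μ C = s ∧ (C.1 : Set Z) ⊆ (M.1 : Set Z)} ∧
    Set.Nontrivial {C : Subcontinua Z | μ C = s ∧ (C.1 : Set Z) ⊆ (M.1 : Set Z)} := by
  haveI : CompactSpace (Subcontinua Z) := compactSpace_subcontinua
  set Λ : Set (Subcontinua Z) := {C | μ C = s ∧ (C.1 : Set Z) ⊆ (M.1 : Set Z)} with hΛ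
  have hKΛ : K ∈ Λ := ⟨hμK, hKM⟩
  have hsM : s ≤ μ M := hμK ▸ w_mono hμ hKM
  have hthrough : ∀ x ∈ (M.1 : Set Z), ∃ D, D ∈ Λ ∧ x ∈ (D.1 : Set Z) := by
    intro x hx
    obtain ⟨γ, _, hprops, hval, _, _, _⟩ := exists_chain hμ M hx
    exact ⟨γ s, ⟨hval s ⟨hs0, hsM⟩, (hprops s).2⟩, (hprops s).1⟩
  have hΛclosed : IsClosed Λ := by
    have h1 : IsClosed {C : Subcontinua Z | μ C = s} := isClosed_singleton.preimage hμ.1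
    have h2 : IsClosed {C : Subcontinua Z | (C.1 : Set Z) ⊆ (M.1 : Set Z)} := by
      apply IsSeqClosed.isClosed
      intro Cn C hCn hlim
      exact subset_of_tendsto_closed ((continuous_subtype_val.tendsto C).comp hlim)
        M.1.isCompact.isClosed hCn
    exact h1.inter h2
  have hΛcompact : IsCompact Λ := hΛclosed.isCompact
  refine ⟨hΛcompact, ⟨⟨K, hKΛ⟩, ?_⟩, ?_⟩
  · -- preconnectedness
    intro u v hu hv hcov hTu hTv
    by_contra hempty
    rw [Set.not_nonempty_iff_eq_empty] at hempty
    set Hset : Set (Subcontinua Z) := Λ \ v with hHset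
    set Kset : Set (Subcontinua Z) := Λ \ u with hKset
    have hHclosed : IsClosed Hset := hΛclosed.sdiff hv
    have hKclosed : IsClosed Kset := hΛclosed.sdiff hu
    have hHcompact : IsCompact Hset := hHclosed.isCompact
    have hKcompact : IsCompact Kset := hKclosed.isCompact
    have hHu : ∀ D ∈ Hset, D ∈ u := fun D hD => (hcov hD.1).resolve_right hD.2
    have hKv : ∀ D ∈ Kset, D ∈ v := fun D hD => (hcov hD.1).resolve_left hD.2
    have hsplit : ∀ D ∈ Λ, D ∈ Hset ∨ D ∈ Kset := by
      intro D hD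
      by_cases h : D ∈ v
      · refine Or.inr ⟨hD, fun hDu => ?_⟩
        have : D ∈ Λ ∩ (u ∩ v) := ⟨hD, hDu, h⟩
        rw [hempty] at this
        exact this
      · exact Or.inl ⟨hD, h⟩
    set A : Set Z := {z | ∃ D ∈ Hset, z ∈ (D.1 : Set Z)} with hA
    set B : Set Z := {z | ∃ D ∈ Kset, z ∈ (D.1 : Set Z)} with hB
    have hunion_closed : ∀ (G : Set (Subcontinua Z)), IsCompact G →
        IsClosed {z | ∃ D ∈ G, z ∈ (D.1 : Set Z)} := by
      intro G hG
      apply IsSeqClosed.isClosed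
      intro zn z hzn hz
      choose Dn hDn1 hDn2 using hzn
      obtain ⟨L, hL, φ, hφ, hφlim⟩ := hG.tendsto_subseq hDn1
      refine ⟨L, hL, ?_⟩
      exact mem_of_tendsto' ((continuous_subtype_val.tendsto L).comp hφlim)
        (fun n => hDn2 (φ n)) (hz.comp hφ.tendsto_atTop)
    have hAclosed : IsClosed A := hunion_closed Hset hHcompact
    have hBclosed : IsClosed B := hunion_closed Kset hKcompact
    have hcover2 : (M.1 : Set Z) ⊆ A ∪ B := by
      intro x hx
      obtain ⟨D, hDΛ, hxD⟩ := hthrough x hx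
      rcases hsplit D hDΛ with h | h
      · exact Or.inl ⟨D, h, hxD⟩
      · exact Or.inr ⟨D, h, hxD⟩
    have hAne : ((M.1 : Set Z) ∩ A).Nonempty := by
      obtain ⟨D, hDΛ, hDu⟩ := hTu
      have hDH : D ∈ Hset := ⟨hDΛ, fun hDv => by
        have : D ∈ Λ ∩ (u ∩ v) := ⟨hDΛ, hDu, hDv⟩
        rw [hempty] at this
        exact this⟩
      obtain ⟨z, hz⟩ := D.1.nonempty
      exact ⟨z, hDΛ.2 hz, D, hDH, hz⟩
    have hBne : ((M.1 : Set Z) ∩ B).Nonempty := by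
      obtain ⟨D, hDΛ, hDv⟩ := hTv
      have hDK : D ∈ Kset := ⟨hDΛ, fun hDu => by
        have : D ∈ Λ ∩ (u ∩ v) := ⟨hDΛ, hDu, hDv⟩
        rw [hempty] at this
        exact this⟩
      obtain ⟨z, hz⟩ := D.1.nonempty
      exact ⟨z, hDΛ.2 hz, D, hDK, hz⟩
    obtain ⟨x0, hx0M, hx0AB⟩ := isPreconnected_closed_iff.1 M.2.isPreconnected A B
      hAclosed hBclosed hcover2 hAne hBne
    obtain ⟨DH, hDHmem, hx0DH⟩ := hx0AB.1
    obtain ⟨DK, hDKmem, hx0DK⟩ := hx0AB.2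
    have hμDH : μ DH = s := hDHmem.1.1
    have hμDK : μ DK = s := hDKmem.1.1
    obtain ⟨γ, hγcont, hγprops, hγval, hγmono, hγ0, hγtop⟩ := exists_chain hμ DH hx0DH
    obtain ⟨δ, hδcont, hδprops, hδval, hδmono, hδ0, hδtop⟩ := exists_chain hμ DK hx0DK
    rw [hμDH] at hγval hγtop
    rw [hμDK] at hδval hδtop
    set W : ℝ × ℝ → Subcontinua Z := fun p =>
      ⟨(γ p.1).1 ⊔ (δ p.2).1, by
        rw [NonemptyCompacts.coe_sup]
        exact IsConnected.union ⟨x0, (hγprops p.1).1, (hδprops p.2).1⟩ (γ p.1).2 (δ p.2).2⟩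
      with hW
    have hWcoe : ∀ p, ((W p).1 : Set Z) = ((γ p.1).1 : Set Z) ∪ ((δ p.2).1 : Set Z) :=
      fun p => NonemptyCompacts.coe_sup _ _
    have hWcont : Continuous W := by
      apply Continuous.subtype_mk
      exact continuous_sup.comp
        ((continuous_subtype_val.comp (hγcont.comp continuous_fst)).prodMk
          (continuous_subtype_val.comp (hδcont.comp continuous_snd)))
    set f : ℝ × ℝ → ℝ := fun p => μ (W p) with hf
    have hfcont : Continuous f := hμ.1.comp hWcont
    have hfmono : ∀ p q : ℝ × ℝ, p.1 ≤ q.1 → p.2 ≤ q.2 → f p ≤ f q := by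
      intro p q h1 h2
      apply w_mono hμ
      rw [hWcoe, hWcoe]
      exact Set.union_subset_union (hγmono _ _ h1) (hδmono _ _ h2)
    have hγsub : ∀ x : ℝ, ((W (x, 0)).1 : Set Z) = ((γ x).1 : Set Z) := by
      intro x
      rw [hWcoe]
      simp only [hδ0, pt_coe]
      exact Set.union_eq_self_of_subset_right
        (Set.singleton_subset_iff.2 (hγprops x).1)
    have hflow : ∀ x ∈ Icc (0:ℝ) s, f (x, 0) ≤ s := by
      intro x hx
      have : W (x, 0) = γ x := subc_ext (hγsub x)
      rw [hf]
      simp only [this]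
      rw [hγval x hx]
      exact hx.2
    have hfhigh : ∀ x ∈ Icc (0:ℝ) s, s ≤ f (x, s) := by
      intro x hx
      have hsub : ((δ s).1 : Set Z) ⊆ (W (x, s)).1 := by
        rw [hWcoe]
        exact Set.subset_union_right
      have := w_mono hμ hsub
      rwa [hδval s ⟨hs0, le_rfl⟩] at this
    have hTpc := levelset_preconnected hs0 f hfcont.continuousOn hfmono hflow hfhigh
    set T : Set (ℝ × ℝ) := {p | p ∈ Icc (0:ℝ) s ×ˢ Icc (0:ℝ) s ∧ f p = s} with hT
    have himgpc : IsPreconnected (W '' T) := hTpc.image W hWcont.continuousOn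
    have himgΛ : W '' T ⊆ Λ := by
      rintro _ ⟨p, hp, rfl⟩
      refine ⟨hp.2, ?_⟩
      rw [hWcoe]
      exact Set.union_subset ((hγprops p.1).2.trans hDHmem.1.2)
        ((hδprops p.2).2.trans hDKmem.1.2)
    have hWs0 : W (s, 0) = DH := by
      apply subc_ext
      rw [hγsub s, hγtop]
    have hW0s : W (0, s) = DK := by
      apply subc_ext
      rw [hWcoe]
      simp only [hγ0, pt_coe, hδtop]
      exact Set.union_eq_self_of_subset_left
        (Set.singleton_subset_iff.2 hx0DK)
    have hs0T : (s, (0:ℝ)) ∈ T := by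
      refine ⟨⟨⟨hs0, le_rfl⟩, ⟨le_rfl, hs0⟩⟩, ?_⟩
      rw [hf]
      simp only [hWs0]
      exact hμDH
    have h0sT : ((0:ℝ), s) ∈ T := by
      refine ⟨⟨⟨le_rfl, hs0⟩, ⟨hs0, le_rfl⟩⟩, ?_⟩
      rw [hf]
      simp only [hW0s]
      exact hμDK
    obtain ⟨E, hEimg, hEu, hEv⟩ := himgpc u v hu hv (himgΛ.trans hcov)
      ⟨DH, ⟨(s, 0), hs0T, hWs0⟩, hHu DH hDHmem⟩
      ⟨DK, ⟨(0, s), h0sT, hW0s⟩, hKv DK hDKmem⟩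
    have : E ∈ Λ ∩ (u ∩ v) := ⟨himgΛ hEimg, hEu, hEv⟩
    rw [hempty] at this
    exact this
  · -- nontriviality
    obtain ⟨D, hDΛ, hx1D⟩ := hthrough x1 hx1M
    exact ⟨D, hDΛ, K, hKΛ, fun h => hx1K (h ▸ hx1D)⟩

end Level

section Preimage

variable [CompactSpace Z]

lemma preimage_connected {q : Z → unitInterval} (hqc : Continuous q)
    (hqs : Function.Surjective q) (hqmono : ∀ y, IsConnected (q ⁻¹' {y}))
    (T : Set unitInterval) (hTclosed : IsClosed T) (hTconn : IsPreconnected T)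
    (hTne : T.Nonempty) : IsConnected (q ⁻¹' T) := by
  obtain ⟨y0, hy0⟩ := hTne
  obtain ⟨z0, hz0⟩ := hqs y0
  refine ⟨⟨z0, by rw [Set.mem_preimage, hz0]; exact hy0⟩, ?_⟩
  have hpreclosed : IsClosed (q ⁻¹' T) := hTclosed.preimage hqc
  rw [isPreconnected_iff_subset_of_fully_disjoint_closed hpreclosed]
  intro u v hu hv hcov hdisj
  have hfib : ∀ y : unitInterval, q ⁻¹' {y} ⊆ q ⁻¹' T →
      q ⁻¹' {y} ⊆ u ∨ q ⁻¹' {y} ⊆ v := by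
    intro y hyT
    exact (isPreconnected_iff_subset_of_fully_disjoint_closed
      (isClosed_singleton.preimage hqc)).1 (hqmono y).isPreconnected u v hu hv
      (hyT.trans hcov) hdisj
  set Au : Set unitInterval := q '' (q ⁻¹' T ∩ u) with hAu
  set Av : Set unitInterval := q '' (q ⁻¹' T ∩ v) with hAv
  have hAuclosed : IsClosed Au :=
    ((hpreclosed.isCompact.inter_right hu).image hqc).isClosed
  have hAvclosed : IsClosed Av :=
    ((hpreclosed.isCompact.inter_right hv).image hqc).isClosed
  have hTcov : T ⊆ Au ∪ Av := by
    intro y hy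
    obtain ⟨z, hz⟩ := hqs y
    have hzT : z ∈ q ⁻¹' T := by rw [Set.mem_preimage, hz]; exact hy
    rcases hcov hzT with h | h
    · exact Or.inl ⟨z, ⟨hzT, h⟩, hz⟩
    · exact Or.inr ⟨z, ⟨hzT, h⟩, hz⟩
  have hfibsub : ∀ y ∈ T, q ⁻¹' {y} ⊆ q ⁻¹' T := by
    intro y hy z hz
    rw [Set.mem_preimage]
    rw [Set.mem_preimage, Set.mem_singleton_iff] at hz
    rw [hz]
    exact hy
  have hdisj2 : Disjoint Au Av := by
    rw [Set.disjoint_left]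
    rintro y ⟨z1, ⟨hz1T, hz1u⟩, hqz1⟩ ⟨z2, ⟨hz2T, hz2v⟩, hqz2⟩
    have hyT : y ∈ T := by rw [← hqz1]; exact hz1T
    rcases hfib y (hfibsub y hyT) with h | h
    · exact hdisj.le_bot ⟨h hqz2, hz2v⟩
    · exact hdisj.le_bot ⟨hz1u, h hqz1⟩
  rcases (isPreconnected_iff_subset_of_fully_disjoint_closed hTclosed).1 hTconn
    Au Av hAuclosed hAvclosed hTcov hdisj2 with h | h
  · refine Or.inl ?_
    intro z hz
    have hyT : q z ∈ T := hz
    obtain ⟨w, ⟨hwT, hwu⟩, hqw⟩ := h hyT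
    rcases hfib (q z) (hfibsub _ hyT) with hh | hh
    · exact hh rfl
    · exact (hdisj.le_bot ⟨hwu, hh hqw⟩).elim
  · refine Or.inr ?_
    intro z hz
    have hyT : q z ∈ T := hz
    obtain ⟨w, ⟨hwT, hwv⟩, hqw⟩ := h hyT
    rcases hfib (q z) (hfibsub _ hyT) with hh | hh
    · exact (hdisj.le_bot ⟨hh hqw, hwv⟩).elim
    · exact hh rfl

lemma icc_closed (x y : unitInterval) : IsClosed (Set.Icc x y) := by
  have : (Set.Icc x y : Set unitInterval) = Subtype.val ⁻¹' (Set.Icc (x:ℝ) (y:ℝ)) := by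
    ext w
    simp [Set.mem_Icc, ← Subtype.coe_le_coe]
  rw [this]
  exact isClosed_Icc.preimage continuous_subtype_val

lemma icc_preconnected (x y : unitInterval) : IsPreconnected (Set.Icc x y) := by
  rw [← IsInducing.subtypeVal.isPreconnected_image]
  have : Subtype.val '' (Set.Icc x y : Set unitInterval) = Set.Icc (x:ℝ) (y:ℝ) := by
    apply Set.Subset.antisymm
    · rintro _ ⟨w, hw, rfl⟩
      exact ⟨Subtype.coe_le_coe.2 hw.1, Subtype.coe_le_coe.2 hw.2⟩
    · intro w hw
      have hw01 : w ∈ Set.Icc (0:ℝ) 1 := ⟨x.2.1.trans hw.1, hw.2.trans y.2.2⟩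
      exact ⟨⟨w, hw01⟩, ⟨Subtype.coe_le_coe.1 hw.1, Subtype.coe_le_coe.1 hw.2⟩, rfl⟩
  rw [this]
  exact isPreconnected_Icc

end Preimage

end WhitneyPf

/-- A map between continua is atomic if `f ⁻¹' (f '' A) = A` for every subcontinuum `A`
with nondegenerate image. -/
def IsAtomicMap {X Y : Type*} [TopologicalSpace X] [TopologicalSpace Y] (f : X → Y) : Prop :=
  ∀ A : Set X, IsCompact A → IsConnected A → (f '' A).Nontrivial → f ⁻¹' (f '' A) = A

open WhitneyPf in
/-- Each of the two halves of the Whitney level `μ ⁻¹' {s}` is a nondegenerate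
subcontinuum of the Whitney level (nonempty, compact, connected and with more than one
point, as a subset of `C(Z)`). -/
theorem whitney_level_halves_are_continua {Z : Type*} [MetricSpace Z] [CompactSpace Z]
    [ConnectedSpace Z]
    (q : Z → unitInterval) (hqc : Continuous q) (hqs : Function.Surjective q)
    (hqmono : ∀ y : unitInterval, IsConnected (q ⁻¹' {y}))
    (hqatomic : IsAtomicMap q)
    (hqopen : IsOpenMap q)
    (h1 : ∃ z : Z, q ⁻¹' {1} = {z})
    (hfib : ∀ y : unitInterval, y < 1 → (q ⁻¹' {y}).Nontrivial)
    (μ : Subcontinua Z → ℝ) (hμ : IsWhitneyMap μ)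
    (Ztop : Subcontinua Z) (hZtop : (Ztop.1 : Set Z) = Set.univ)
    (s : ℝ) (hs0 : 0 < s) (hsμ : s < μ Ztop)
    (a b : unitInterval) (ha : 0 < a) (hb : b < 1) (hab : a ≤ b)
    (K : Subcontinua Z) (hK : (K.1 : Set Z) = q ⁻¹' (Set.Icc a b)) (hμK : μ K = s) :
    (IsCompact {C : Subcontinua Z | μ C = s ∧ (C.1 : Set Z) ⊆ q ⁻¹' (Set.Icc 0 b)} ∧
      IsConnected {C : Subcontinua Z | μ C = s ∧ (C.1 : Set Z) ⊆ q ⁻¹' (Set.Icc 0 b)} ∧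
      Set.Nontrivial {C : Subcontinua Z | μ C = s ∧ (C.1 : Set Z) ⊆ q ⁻¹' (Set.Icc 0 b)}) ∧
    (IsCompact {C : Subcontinua Z | μ C = s ∧ (C.1 : Set Z) ⊆ q ⁻¹' (Set.Icc a 1)} ∧
      IsConnected {C : Subcontinua Z | μ C = s ∧ (C.1 : Set Z) ⊆ q ⁻¹' (Set.Icc a 1)} ∧
      Set.Nontrivial {C : Subcontinua Z | μ C = s ∧ (C.1 : Set Z) ⊆ q ⁻¹' (Set.Icc a 1)}) := by
  constructor
  · -- first half : below b
    have hconn : IsConnected (q ⁻¹' (Set.Icc (0:unitInterval) b)) := by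
      apply preimage_connected hqc hqs hqmono _ (icc_closed 0 b) (icc_preconnected 0 b)
      exact ⟨0, le_rfl, Subtype.coe_le_coe.1 b.2.1⟩
    have hclosed : IsClosed (q ⁻¹' (Set.Icc (0:unitInterval) b)) :=
      (icc_closed 0 b).preimage hqc
    set Mb : Subcontinua Z :=
      ⟨⟨⟨q ⁻¹' (Set.Icc (0:unitInterval) b), hclosed.isCompact⟩, hconn.1⟩, hconn⟩ with hMb
    have hKMb : (K.1 : Set Z) ⊆ (Mb.1 : Set Z) := by
      rw [hK]
      intro z hz
      exact ⟨le_trans (Subtype.coe_le_coe.1 a.2.1) hz.1, hz.2⟩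
    obtain ⟨x0, hx0⟩ := hqs 0
    have hx0M : x0 ∈ (Mb.1 : Set Z) := by
      show q x0 ∈ Set.Icc (0:unitInterval) b
      rw [hx0]
      exact ⟨le_rfl, Subtype.coe_le_coe.1 b.2.1⟩
    have hx0K : x0 ∉ (K.1 : Set Z) := by
      rw [hK]
      intro hmem
      have : a ≤ q x0 := hmem.1
      rw [hx0] at this
      exact absurd this (not_le.2 ha)
    exact level_halves hμ Mb s hs0.le K hKMb hμK hx0M hx0K
  · -- second half : above a
    have hconn : IsConnected (q ⁻¹' (Set.Icc a (1:unitInterval))) := by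
      apply preimage_connected hqc hqs hqmono _ (icc_closed a 1) (icc_preconnected a 1)
      exact ⟨a, le_rfl, Subtype.coe_le_coe.1 a.2.2⟩
    have hclosed : IsClosed (q ⁻¹' (Set.Icc a (1:unitInterval))) :=
      (icc_closed a 1).preimage hqc
    set Ma : Subcontinua Z :=
      ⟨⟨⟨q ⁻¹' (Set.Icc a (1:unitInterval)), hclosed.isCompact⟩, hconn.1⟩, hconn⟩ with hMa
    have hKMa : (K.1 : Set Z) ⊆ (Ma.1 : Set Z) := by
      rw [hK]
      intro z hz
      exact ⟨hz.1, le_trans hz.2 (Subtype.coe_le_coe.1 b.2.2)⟩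
    obtain ⟨x1, hx1⟩ := hqs 1
    have hx1M : x1 ∈ (Ma.1 : Set Z) := by
      show q x1 ∈ Set.Icc a (1:unitInterval)
      rw [hx1]
      exact ⟨Subtype.coe_le_coe.1 a.2.2, le_rfl⟩
    have hx1K : x1 ∉ (K.1 : Set Z) := by
      rw [hK]
      intro hmem
      have : q x1 ≤ b := hmem.2
      rw [hx1] at this
      exact absurd this (not_le.2 hb)
    exact level_halves hμ Ma s hs0.le K hKMa hμK hx1M hx1K
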